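/- Let A be an integral domain whose additive group is finitely generated. Then A has characteristic 0 if and only if 2 ≠ 0 in A and 2 is not invertible in A. -/

import Mathlib

/-- an integral domain with finitely generated additive group has
characteristic 0 iff `2 ≠ 0` and `2` is not invertible. -/
theorem charZero_iff_two_ne_zero_not_unit (A : Type*) [CommRing A] [IsDomain A]
    (hA : AddGroup.FG A) :
    ringChar A = 0 ↔ (2 : A) ≠ 0 ∧ ¬ IsUnit (2 : A) := by
  constructor
  · intro h0
    haveI : CharP A 0 := h0 ▸ ringChar.charP A
    haveI : CharZero A := CharP.charP_to_charZero A
    refine ⟨two_ne_zero, ?_⟩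
    rintro ⟨u, hu⟩
    haveI : Module.Finite ℤ A := Module.Finite.iff_addGroup_fg.2 hA
    haveI : Module.IsTorsionFree ℤ A := inferInstance
    haveI : Module.Free ℤ A := Module.free_of_finite_type_torsion_free'
    let b := Module.Free.chooseBasis ℤ A
    -- 1 = 2^n * (u⁻¹)^n for all n
    have key : ∀ n : ℕ, ∀ i, (2 ^ n : ℤ) ∣ b.repr 1 i := by
      intro n i
      have h1 : (1 : A) = (2 : A) ^ n * ((u⁻¹ : Aˣ) : A) ^ n := by
        rw [← mul_pow, ← hu, Units.mul_inv, one_pow]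
      have := congrArg (fun x => b.repr x i) h1
      have h2 : (2 : A) ^ n = ((2 ^ n : ℤ) : A) := by push_cast; ring
      rw [h2, ← zsmul_eq_mul, map_zsmul] at this
      exact ⟨_, this⟩
    have hz : b.repr 1 = 0 := by
      ext i
      refine Int.eq_zero_of_dvd_of_natAbs_lt_natAbs
        (key (b.repr 1 i).natAbs i) ?_
      have : (b.repr 1 i).natAbs < 2 ^ (b.repr 1 i).natAbs :=
        Nat.lt_two_pow_self
      calc (b.repr 1 i).natAbs < 2 ^ (b.repr 1 i).natAbs := this
        _ = ((2:ℤ) ^ (b.repr 1 i).natAbs).natAbs := by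
            rw [Int.natAbs_pow]; norm_num
    have : (1 : A) = 0 := by
      have := congrArg b.repr.symm (hz)
      simpa using this
    exact one_ne_zero this
  · rintro ⟨h2, hu⟩
    by_contra h0
    haveI : CharP A (ringChar A) := ringChar.charP A
    rcases CharP.char_is_prime_or_zero A (ringChar A) with hp | hp
    · set p := ringChar A with hpdef
      have hodd : p ≠ 2 := by
        intro hp2
        exact h2 (by rw [show (2:A) = ((2:ℕ):A) by norm_num,
          CharP.cast_eq_zero_iff A p, hp2])
      -- p is odd, so 2 is invertible
      have hpodd : p % 2 = 1 := Nat.odd_iff.1 (hp.odd_of_ne_two hodd)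
      have hmul : 2 * ((p + 1) / 2) = p + 1 := by omega
      apply hu
      refine IsUnit.of_mul_eq_one (((p + 1) / 2 : ℕ) : A) ?_
      have : ((2 * ((p + 1) / 2) : ℕ) : A) = ((p + 1 : ℕ) : A) := by rw [hmul]
      push_cast at this
      rw [this, CharP.cast_eq_zero A p, zero_add]
    · exact h0 hp
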